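/- Under the billiard polygon setup, Σ_{i=1}^{n} h'(ψᵢ)·sin δᵢ = 0. -/

import Mathlib

open Real

/-- For a billiard `n`-gon in a smooth convex curve with support function `h`,
one has `∑ h'(ψᵢ) sin δᵢ = 0`. -/
theorem stmt_3 (h : ℝ → ℝ) (hd : Differentiable ℝ h)
    (n : ℕ) (hn : 2 ≤ n)
    (φ ψ δ : ℕ → ℝ)
    (hφ : φ n = φ 0 + 2 * Real.pi)
    (hψ : ∀ i ∈ Finset.Icc 1 n, ψ i = (φ (i - 1) + φ i) / 2)
    (hδ : ∀ i ∈ Finset.Icc 1 n, δ i = (φ i - φ (i - 1)) / 2)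
    (M : ℕ → EuclideanSpace ℝ (Fin 2))
    (hM : ∀ i ∈ Finset.Icc 1 n, M i
        = h (ψ i) • (WithLp.toLp 2 ![Real.cos (ψ i), Real.sin (ψ i)] : EuclideanSpace ℝ (Fin 2))
        + deriv h (ψ i) • (WithLp.toLp 2 ![-Real.sin (ψ i), Real.cos (ψ i)] : EuclideanSpace ℝ (Fin 2)))
    (hMwrap : M (n + 1) = M 1)
    (chord : ∀ i ∈ Finset.Icc 1 n, ∃ t : ℝ, 0 < t ∧
        M (i + 1) - M i = t • (WithLp.toLp 2 ![-Real.sin (φ i), Real.cos (φ i)] : EuclideanSpace ℝ (Fin 2))) :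
    ∑ i ∈ Finset.Icc 1 n, deriv h (ψ i) * Real.sin (δ i) = 0 := by
  classical
  set A : ℕ → ℝ := fun j => h (ψ j) * Real.cos (δ j) - deriv h (ψ j) * Real.sin (δ j) with hA
  set B : ℕ → ℝ := fun j => h (ψ j) * Real.cos (δ j) + deriv h (ψ j) * Real.sin (δ j) with hB
  set nxt : ℕ → ℕ := fun i => if i = n then 1 else i + 1 with hnxt
  -- components of M
  have hMc : ∀ j ∈ Finset.Icc 1 n, ∀ θ : ℝ,
      Real.cos θ * M j 0 + Real.sin θ * M j 1
        = h (ψ j) * Real.cos (θ - ψ j) + deriv h (ψ j) * Real.sin (θ - ψ j) := by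
    intro j hj θ
    have h0 := congrArg (fun v : EuclideanSpace ℝ (Fin 2) => v 0) (hM j hj)
    have h1 := congrArg (fun v : EuclideanSpace ℝ (Fin 2) => v 1) (hM j hj)
    simp at h0 h1
    rw [h0, h1, Real.cos_sub, Real.sin_sub]; ring
  -- chord projection
  have hQ : ∀ i ∈ Finset.Icc 1 n,
      Real.cos (φ i) * M (i+1) 0 + Real.sin (φ i) * M (i+1) 1
        = Real.cos (φ i) * M i 0 + Real.sin (φ i) * M i 1 := by
    intro i hi
    obtain ⟨t, ht, heq⟩ := chord i hi
    have h0 := congrArg (fun v : EuclideanSpace ℝ (Fin 2) => v 0) heq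
    have h1 := congrArg (fun v : EuclideanSpace ℝ (Fin 2) => v 1) heq
    simp at h0 h1
    linear_combination Real.cos (φ i) * h0 + Real.sin (φ i) * h1
  -- the key cyclic relation
  have key : ∀ i ∈ Finset.Icc 1 n, A (nxt i) = B i := by
    intro i hi
    rw [Finset.mem_Icc] at hi
    have hii : i ∈ Finset.Icc 1 n := Finset.mem_Icc.mpr hi
    have hBi : Real.cos (φ i) * M i 0 + Real.sin (φ i) * M i 1 = B i := by
      rw [hMc i hii (φ i)]
      have e1 : φ i - ψ i = δ i := by
        rw [hψ i hii, hδ i hii]; ring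
      rw [e1]
    by_cases hin : i = n
    · -- wrap-around case
      have h1n : (1 : ℕ) ∈ Finset.Icc 1 n := Finset.mem_Icc.mpr ⟨le_refl 1, by omega⟩
      have e2 : φ n - ψ 1 = -(δ 1) + 2 * Real.pi := by
        rw [hφ, hψ 1 h1n, hδ 1 h1n]; norm_num; ring
      have hnn : nxt i = 1 := by simp [hnxt, hin]
      have : A 1 = Real.cos (φ i) * M (i+1) 0 + Real.sin (φ i) * M (i+1) 1 := by
        rw [hin, hMwrap, hMc 1 h1n (φ n), e2]
        simp only [hA]
        rw [Real.cos_add_two_pi, Real.sin_add_two_pi, Real.cos_neg, Real.sin_neg]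
        ring
      rw [hnn, this, hQ i hii, hBi]
    · -- interior case
      have hin' : i + 1 ∈ Finset.Icc 1 n := Finset.mem_Icc.mpr ⟨by omega, by omega⟩
      have e2 : φ i - ψ (i+1) = -(δ (i+1)) := by
        have := hψ (i+1) hin'
        have h2 := hδ (i+1) hin'
        simp only [Nat.add_sub_cancel] at this h2
        rw [this, h2]; ring
      have : A (nxt i) = Real.cos (φ i) * M (i+1) 0 + Real.sin (φ i) * M (i+1) 1 := by
        rw [hMc (i+1) hin' (φ i), e2]
        simp only [hnxt, if_neg hin, hA]
        rw [Real.cos_neg, Real.sin_neg]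
        ring
      rw [this, hQ i hii, hBi]
  -- nxt is a bijection of Icc 1 n
  have hsum : ∑ i ∈ Finset.Icc 1 n, A (nxt i) = ∑ j ∈ Finset.Icc 1 n, A j := by
    apply Finset.sum_nbij' (i := nxt) (j := fun j => if j = 1 then n else j - 1)
    · intro a ha; rw [Finset.mem_Icc] at *; simp only [hnxt]; split_ifs <;> omega
    · intro a ha; rw [Finset.mem_Icc] at *; split_ifs <;> omega
    · intro a ha; rw [Finset.mem_Icc] at ha; simp only [hnxt]; split_ifs <;> omega
    · intro a ha; rw [Finset.mem_Icc] at ha; simp only [hnxt]; split_ifs <;> omega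
    · intro a ha; rfl
  have hzero : ∑ i ∈ Finset.Icc 1 n, (B i - A (nxt i)) = 0 := by
    apply Finset.sum_eq_zero
    intro i hi; rw [key i hi]; ring
  rw [Finset.sum_sub_distrib, hsum] at hzero
  have hfin : ∑ i ∈ Finset.Icc 1 n, (B i - A i) = 0 := by
    rw [Finset.sum_sub_distrib]; linarith [hzero]
  have : ∑ i ∈ Finset.Icc 1 n, (B i - A i)
      = 2 * ∑ i ∈ Finset.Icc 1 n, deriv h (ψ i) * Real.sin (δ i) := by
    rw [Finset.mul_sum]
    apply Finset.sum_congr rfl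
    intro i _; simp only [hA, hB]; ring
  rw [this] at hfin
  linarith
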